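/- arXiv:0812.1401 — 2 statements merged into one kernel-verified Lean document; each statement's English description precedes it below -/
import Mathlib

section
/- Let E and F be Banach spaces, n a positive integer and 1 ≤ p < ∞. A continuous n-homogeneous polynomial P : E → F is p-dominated if and only if there exist a constant C > 0 and a regular Borel probability measure μ on the closed unit ball B_{E*} of the dual E* equipped with the weak* topology such that ‖P(x)‖ ≤ C · (∫_{B_{E*}} |x*(x)|^p dμ(x*))^{n/p} for every x ∈ E; moreover, ‖P‖_{d,p} equals the least constant C for which such a measure exists. -/
open MeasureTheory Finset
open scoped Classical

noncomputable section

/-- The closed unit ball of the dual of `E`, equipped with the weak* topology. -/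
abbrev DualBall (𝕜 E : Type) [RCLike 𝕜] [NormedAddCommGroup E] [NormedSpace 𝕜 E] : Type :=
  {φ : WeakDual 𝕜 E // ‖WeakDual.toStrongDual φ‖ ≤ 1}

variable (𝕜 : Type) [RCLike 𝕜] {E F G : Type} [NormedAddCommGroup E] [NormedSpace 𝕜 E]
  [NormedAddCommGroup F] [NormedSpace 𝕜 F] [NormedAddCommGroup G] [NormedSpace 𝕜 G]

instance : MeasurableSpace (DualBall 𝕜 E) := borel _
instance : BorelSpace (DualBall 𝕜 E) := ⟨rfl⟩

/-- `P : E → F` is a continuous `n`-homogeneous polynomial: `P x = M (x, …, x)` for some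
continuous `n`-linear map `M`. -/
def IsHomogPoly (n : ℕ) (P : E → F) : Prop :=
  ∃ M : ContinuousMultilinearMap 𝕜 (fun _ : Fin n => E) F, ∀ x, P x = M (fun _ => x)

/-- The `p`-domination inequality for the `n`-homogeneous map `P` with constant `C`. -/
def DomIneq (p : ℝ) (n : ℕ) (P : E → F) (C : ℝ) : Prop :=
  ∀ (m : ℕ) (x : Fin m → E),
    (∑ j, ‖P (x j)‖ ^ (p / (n : ℝ))) ^ ((n : ℝ) / p) ≤
      C * ⨆ φ : DualBall 𝕜 E, (∑ j, ‖φ.1 (x j)‖ ^ p) ^ ((n : ℝ) / p)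

/-- The `p`-dominated norm `‖P‖_{d,p}`: the infimum of the constants in the domination
inequality. -/
def domNorm (p : ℝ) (n : ℕ) (P : E → F) : ℝ :=
  sInf {C : ℝ | 0 < C ∧ DomIneq 𝕜 p n P C}

/-- The element `(e_x)^n` of `L_{p/n}(μ)`, i.e. the class of the continuous function
`x* ↦ ⟨x*, x⟩ ^ n` on the dual ball. -/
def evalPowLp (p : ℝ) (n : ℕ) (μ : Measure (DualBall 𝕜 E)) (x : E) :
    Lp 𝕜 (ENNReal.ofReal (p / (n : ℝ))) μ :=
  if h : MemLp (fun φ : DualBall 𝕜 E => (φ.1 x) ^ n) (ENNReal.ofReal (p / (n : ℝ))) μ then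
    h.toLp _
  else 0

/-- The subspace `E^{p/n}` of `L_{p/n}(μ)` spanned by the functions `(e_x)^n`, `x ∈ E`. -/
def Epn (p : ℝ) (n : ℕ) (μ : Measure (DualBall 𝕜 E)) :
    Submodule 𝕜 (Lp 𝕜 (ENNReal.ofReal (p / (n : ℝ))) μ) :=
  Submodule.span 𝕜 (Set.range (evalPowLp 𝕜 p n μ))

/-- The norm `π_{p/n}` on `E^{p/n}`. -/
def piNorm (p : ℝ) (n : ℕ) (μ : Measure (DualBall 𝕜 E))
    (g : Lp 𝕜 (ENNReal.ofReal (p / (n : ℝ))) μ) : ℝ :=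
  sInf {t : ℝ | ∃ (m : ℕ) (c : Fin m → 𝕜) (x : Fin m → E),
    g = ∑ i, c i • evalPowLp 𝕜 p n μ (x i) ∧
    t = ∑ i, ‖c i‖ * ‖evalPowLp 𝕜 p n μ (x i)‖}

/-- The element `e_x` of `L_p(μ)`, i.e. the class of the continuous function
`x* ↦ ⟨x*, x⟩` on the dual ball. -/
def evalLp (p : ℝ) (μ : Measure (DualBall 𝕜 E)) (x : E) : Lp 𝕜 (ENNReal.ofReal p) μ :=
  if h : MemLp (fun φ : DualBall 𝕜 E => φ.1 x) (ENNReal.ofReal p) μ then h.toLp _ else 0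

/-- The absolutely `p`-summing inequality for `S` with constant `C`. -/
def SummingIneq (p : ℝ) (S : E → G) (C : ℝ) : Prop :=
  ∀ (m : ℕ) (x : Fin m → E),
    (∑ j, ‖S (x j)‖ ^ p) ^ (1 / p) ≤
      C * ⨆ φ : DualBall 𝕜 E, (∑ j, ‖φ.1 (x j)‖ ^ p) ^ (1 / p)

/-- The `p`-summing norm `π_p(S)`. -/
def summingNorm (p : ℝ) (S : E → G) : ℝ :=
  sInf {C : ℝ | 0 < C ∧ SummingIneq 𝕜 p S C}

/-- The sup norm of a map on the closed unit ball. -/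
def supNorm (Q : G → F) : ℝ := ⨆ y : {y : G // ‖y‖ ≤ 1}, ‖Q y.1‖


set_option linter.unusedSectionVars false
set_option maxHeartbeats 1000000

/-! ### Generic helper lemmas -/

lemma ciSup_rpow {ι : Type*} [Nonempty ι] {g : ι → ℝ} (hg : ∀ i, 0 ≤ g i)
    (hb : BddAbove (Set.range g)) {q : ℝ} (hq : 0 < q) :
    ⨆ i, (g i) ^ q = (⨆ i, g i) ^ q := by
  obtain ⟨M, hM⟩ := hb
  have hM' : ∀ i, g i ≤ M := fun i => hM ⟨i, rfl⟩
  have hb2 : BddAbove (Set.range fun i => g i ^ q) := by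
    refine ⟨(max M 0) ^ q, ?_⟩
    rintro _ ⟨i, rfl⟩
    exact Real.rpow_le_rpow (hg i) ((hM' i).trans (le_max_left _ _)) hq.le
  apply le_antisymm
  · exact ciSup_le fun i => Real.rpow_le_rpow (hg i) (le_ciSup ⟨M, hM⟩ i) hq.le
  · have hs : ∀ i, g i ≤ (⨆ i, g i ^ q) ^ q⁻¹ := by
      intro i
      have h1 : g i ^ q ≤ ⨆ i, g i ^ q := le_ciSup hb2 i
      have h2 : (g i ^ q) ^ q⁻¹ ≤ (⨆ i, g i ^ q) ^ q⁻¹ :=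
        Real.rpow_le_rpow (Real.rpow_nonneg (hg i) q) h1 (by positivity)
      rwa [← Real.rpow_mul (hg i), mul_inv_cancel₀ hq.ne', Real.rpow_one] at h2
    have h3 : (⨆ i, g i) ≤ (⨆ i, g i ^ q) ^ q⁻¹ := ciSup_le hs
    have h0 : 0 ≤ ⨆ i, g i ^ q :=
      le_trans (Real.rpow_nonneg (hg (Classical.arbitrary ι)) q) (le_ciSup hb2 _)
    calc (⨆ i, g i) ^ q ≤ ((⨆ i, g i ^ q) ^ q⁻¹) ^ q :=
          Real.rpow_le_rpow (le_trans (hg _) (le_ciSup ⟨M, hM⟩ (Classical.arbitrary ι))) h3 hq.le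
      _ = ⨆ i, g i ^ q := by
          rw [← Real.rpow_mul h0, inv_mul_cancel₀ hq.ne', Real.rpow_one]

lemma ciSup_const_mul {ι : Type*} [Nonempty ι] {g : ι → ℝ} (hb : BddAbove (Set.range g))
    {c : ℝ} (hc : 0 ≤ c) : ⨆ i, c * g i = c * ⨆ i, g i := by
  rcases hc.eq_or_lt with rfl | hc
  · simp
  · apply le_antisymm
    · exact ciSup_le fun i => by
        have := le_ciSup hb i; nlinarith
    · rw [← le_div_iff₀' hc]
      refine ciSup_le fun i => ?_
      rw [le_div_iff₀' hc]
      refine le_ciSup (f := fun i => c * g i) ?_ i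
      obtain ⟨M, hM⟩ := hb
      exact ⟨c * M, by rintro _ ⟨i, rfl⟩; have := hM ⟨i, rfl⟩; simp only []; nlinarith⟩

lemma sum_min_max (c : ℝ) (hc : 0 ≤ c) (a : ℝ) (ha : 0 ≤ a) (N : ℕ) :
    ∑ i ∈ Finset.range N, min (max (a - i * c) 0) c = min a (N * c) := by
  induction N with
  | zero => simp [ha]
  | succ N ih =>
    rw [Finset.sum_range_succ, ih]
    rcases le_or_gt a (N * c) with h | h
    · have h1 : a - N * c ≤ 0 := by linarith
      have h2 : min a ((N + 1 : ℕ) * c) = a := by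
        apply min_eq_left; push_cast; nlinarith
      rw [max_eq_right h1, min_eq_left hc, h2, min_eq_left h, add_zero]
    · have h1 : max (a - N * c) 0 = a - N * c := max_eq_left (by linarith)
      rw [min_eq_right h.le, h1]
      push_cast
      rcases le_or_gt a ((N + 1) * c) with h2 | h2
      · rw [min_eq_left (by linarith : a - N*c ≤ c), min_eq_left h2]; ring
      · rw [min_eq_right (by linarith : c ≤ a - N*c), min_eq_right h2.le]; ring

section RMK
variable {X : Type} [TopologicalSpace X] [CompactSpace X] [T2Space X]
  [MeasurableSpace X] [BorelSpace X]

/-- The set of values of `Λ` on functions admissible for `K`. -/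
def rieszA (Λ : C(X, ℝ) →L[ℝ] ℝ) (K : Set X) : Set ℝ :=
  {r | ∃ f : C(X, ℝ), (∀ x, 0 ≤ f x) ∧ (∀ x ∈ K, 1 ≤ f x) ∧ r = Λ f}

def rieszL (Λ : C(X, ℝ) →L[ℝ] ℝ) (K : Set X) : ℝ := sInf (rieszA Λ K)

variable (Λ : C(X, ℝ) →L[ℝ] ℝ)

lemma rieszA_nonempty (K : Set X) : (rieszA Λ K).Nonempty :=
  ⟨Λ 1, 1, fun _ => zero_le_one, fun _ _ => le_rfl, rfl⟩

lemma integrableCM (μ : Measure X) [IsFiniteMeasure μ] (g : C(X, ℝ)) :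
    Integrable (fun x => g x) μ := by
  refine ⟨g.continuous.aestronglyMeasurable, ?_⟩
  exact MeasureTheory.HasFiniteIntegral.of_bounded
    (C := ‖g‖) (ae_of_all _ fun x => g.norm_coe_le_norm x)

variable {Λ}
variable (hpos : ∀ f : C(X, ℝ), (∀ x, 0 ≤ f x) → 0 ≤ Λ f)
include hpos

lemma lam_mono' {f g : C(X, ℝ)} (h : ∀ x, f x ≤ g x) : Λ f ≤ Λ g := by
  have := hpos (g - f) (fun x => by simpa using h x)
  rw [map_sub] at this; linarith

lemma rieszA_bddBelow (K : Set X) : BddBelow (rieszA Λ K) := by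
  refine ⟨0, ?_⟩
  rintro r ⟨f, hf0, _, rfl⟩
  exact hpos f hf0

lemma rieszL_nonneg (K : Set X) : 0 ≤ rieszL Λ K :=
  le_csInf (rieszA_nonempty Λ K) (by rintro r ⟨f, hf0, _, rfl⟩; exact hpos f hf0)

lemma rieszL_le {K : Set X} {f : C(X, ℝ)} (hf0 : ∀ x, 0 ≤ f x) (hf1 : ∀ x ∈ K, 1 ≤ f x) :
    rieszL Λ K ≤ Λ f :=
  csInf_le (rieszA_bddBelow hpos K) ⟨f, hf0, hf1, rfl⟩

lemma rieszL_mono {K₁ K₂ : Set X} (h : K₁ ⊆ K₂) : rieszL Λ K₁ ≤ rieszL Λ K₂ := by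
  apply le_csInf (rieszA_nonempty Λ K₂)
  rintro r ⟨f, hf0, hf1, rfl⟩
  exact rieszL_le hpos hf0 (fun x hx => hf1 x (h hx))

lemma rieszL_union_le (K₁ K₂ : Set X) :
    rieszL Λ (K₁ ∪ K₂) ≤ rieszL Λ K₁ + rieszL Λ K₂ := by
  have key : ∀ r₁ ∈ rieszA Λ K₁, ∀ r₂ ∈ rieszA Λ K₂, rieszL Λ (K₁ ∪ K₂) ≤ r₁ + r₂ := by
    rintro _ ⟨f₁, h10, h11, rfl⟩ _ ⟨f₂, h20, h21, rfl⟩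
    have := rieszL_le (Λ := Λ) hpos (K := K₁ ∪ K₂) (f := f₁ + f₂)
      (fun x => by simpa using add_nonneg (h10 x) (h20 x))
      (fun x hx => by
        rcases hx with hx | hx
        · have := h20 x; have := h11 x hx; simp only [ContinuousMap.add_apply]; linarith
        · have := h10 x; have := h21 x hx; simp only [ContinuousMap.add_apply]; linarith)
    simpa using this
  have step1 : ∀ r₁ ∈ rieszA Λ K₁, rieszL Λ (K₁ ∪ K₂) - r₁ ≤ rieszL Λ K₂ := by
    intro r₁ h₁
    apply le_csInf (rieszA_nonempty Λ K₂)
    intro r₂ h₂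
    linarith [key r₁ h₁ r₂ h₂]
  have step2 : rieszL Λ (K₁ ∪ K₂) - rieszL Λ K₂ ≤ rieszL Λ K₁ := by
    apply le_csInf (rieszA_nonempty Λ K₁)
    intro r₁ h₁
    linarith [step1 r₁ h₁]
  linarith

lemma rieszL_union_disjoint {K₁ K₂ : Set X} (hK₁ : IsCompact K₁) (hK₂ : IsClosed K₂)
    (hd : Disjoint K₁ K₂) :
    rieszL Λ K₁ + rieszL Λ K₂ ≤ rieszL Λ (K₁ ∪ K₂) := by
  obtain ⟨u, hu0, hu1, hu01⟩ := exists_continuous_zero_one_of_isCompact hK₁ hK₂ hd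
  apply le_csInf (rieszA_nonempty Λ _)
  rintro _ ⟨f, hf0, hf1, rfl⟩
  -- f * (1 - u) is admissible for K₁, f * u admissible for K₂
  have h1 : rieszL Λ K₁ ≤ Λ (f * (1 - u)) := by
    apply rieszL_le hpos
    · intro x
      simp only [ContinuousMap.mul_apply, ContinuousMap.sub_apply, ContinuousMap.one_apply]
      have := (hu01 x).1; have := (hu01 x).2
      have := hf0 x; nlinarith
    · intro x hx
      have hux : u x = 0 := hu0 hx
      have := hf1 x (Or.inl hx)
      simp only [ContinuousMap.mul_apply, ContinuousMap.sub_apply, ContinuousMap.one_apply, hux]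
      linarith
  have h2 : rieszL Λ K₂ ≤ Λ (f * u) := by
    apply rieszL_le hpos
    · intro x
      simp only [ContinuousMap.mul_apply]
      have := (hu01 x).1; have := hf0 x; nlinarith
    · intro x hx
      have hux : u x = 1 := hu1 hx
      have := hf1 x (Or.inr hx)
      simp only [ContinuousMap.mul_apply, hux]
      linarith
  have : Λ (f * (1 - u)) + Λ (f * u) = Λ f := by
    rw [← map_add]
    congr 1
    ext x
    simp only [ContinuousMap.add_apply, ContinuousMap.mul_apply, ContinuousMap.sub_apply,
      ContinuousMap.one_apply]
    ring
  linarith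

/-- The content associated with a positive functional. -/
def rieszCont : Content X where
  toFun K := (rieszL Λ K).toNNReal
  mono' K₁ K₂ h := Real.toNNReal_mono (rieszL_mono hpos h)
  sup_disjoint' K₁ K₂ hd _ _ := by
    have h1 := rieszL_union_le hpos (K₁ : Set X) K₂
    have h2 := rieszL_union_disjoint hpos K₁.2 K₂.2.isClosed hd
    have he : rieszL Λ ((K₁ ⊔ K₂ : TopologicalSpace.Compacts X) : Set X)
        = rieszL Λ K₁ + rieszL Λ K₂ := by
      rw [TopologicalSpace.Compacts.coe_sup]; exact le_antisymm h1 h2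
    show (rieszL Λ ((K₁ ⊔ K₂ : TopologicalSpace.Compacts X) : Set X)).toNNReal = _
    rw [he, Real.toNNReal_add (rieszL_nonneg hpos _) (rieszL_nonneg hpos _)]
  sup_le' K₁ K₂ := by
    have h1 := rieszL_union_le hpos (K₁ : Set X) K₂
    show (rieszL Λ ((K₁ ⊔ K₂ : TopologicalSpace.Compacts X) : Set X)).toNNReal ≤ _
    calc ((rieszL Λ ((K₁ ⊔ K₂ : TopologicalSpace.Compacts X) : Set X)).toNNReal)
        ≤ (rieszL Λ (K₁ : Set X) + rieszL Λ (K₂ : Set X)).toNNReal := by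
          apply Real.toNNReal_mono
          rwa [TopologicalSpace.Compacts.coe_sup]
      _ ≤ (rieszL Λ (K₁ : Set X)).toNNReal + (rieszL Λ (K₂ : Set X)).toNNReal :=
          le_of_eq (Real.toNNReal_add (rieszL_nonneg hpos _) (rieszL_nonneg hpos _))

def rieszMu : Measure X := (rieszCont hpos).measure

instance : (rieszMu hpos).Regular := Content.regular _

lemma rieszCont_apply (K : TopologicalSpace.Compacts X) :
    (rieszCont hpos) K = ENNReal.ofReal (rieszL Λ (K : Set X)) := rfl

lemma rieszMu_open {U : Set X} (hU : IsOpen U) {K : Set X} (hK : IsCompact K) (hKU : K ⊆ U) :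
    ENNReal.ofReal (rieszL Λ K) ≤ rieszMu hpos U := by
  rw [rieszMu, Content.measure_apply _ hU.measurableSet,
    Content.outerMeasure_of_isOpen _ U hU]
  exact (rieszCont_apply hpos ⟨K, hK⟩) ▸ Content.le_innerContent _ ⟨K, hK⟩ ⟨U, hU⟩ hKU

lemma rieszMu_univ (hone : Λ 1 = 1) : rieszMu hpos Set.univ = 1 := by
  apply le_antisymm
  · rw [rieszMu, Content.measure_apply _ MeasurableSet.univ,
      Content.outerMeasure_of_isOpen _ _ isOpen_univ]
    refine le_trans (Content.innerContent_le _ _ ⟨Set.univ, isCompact_univ⟩ (by simp)) ?_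
    rw [rieszCont_apply hpos]
    have h1 : rieszL Λ ((⟨Set.univ, isCompact_univ⟩ : TopologicalSpace.Compacts X) : Set X) ≤ 1 := by
      have := rieszL_le (Λ := Λ) hpos (K := Set.univ) (f := 1)
        (fun _ => zero_le_one) (fun _ _ => le_rfl)
      rw [hone] at this
      exact this
    calc ENNReal.ofReal (rieszL Λ _) ≤ ENNReal.ofReal 1 := ENNReal.ofReal_le_ofReal h1
      _ = 1 := ENNReal.ofReal_one
  · have h1 : rieszL Λ (Set.univ : Set X) = 1 := by
      apply le_antisymm
      · have := rieszL_le (Λ := Λ) hpos (K := Set.univ) (f := 1)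
          (fun _ => zero_le_one) (fun _ _ => le_rfl)
        rwa [hone] at this
      · apply le_csInf (rieszA_nonempty Λ _)
        rintro _ ⟨f, hf0, hf1, rfl⟩
        have := lam_mono' hpos (f := 1) (g := f) (fun x => hf1 x (Set.mem_univ x))
        rwa [hone] at this
    have := rieszMu_open hpos isOpen_univ isCompact_univ (subset_refl _)
    rwa [h1, ENNReal.ofReal_one] at this

lemma rieszMu_isProb (hone : Λ 1 = 1) : IsProbabilityMeasure (rieszMu hpos) :=
  ⟨rieszMu_univ hpos hone⟩

lemma le_integral_rieszMu (hone : Λ 1 = 1) (f : C(X, ℝ)) (hf : ∀ x, 0 ≤ f x) :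
    Λ f ≤ ∫ x, f x ∂(rieszMu hpos) := by
  set μ := rieszMu hpos with hμ
  haveI : IsProbabilityMeasure μ := rieszMu_isProb hpos hone
  have key : ∀ N : ℕ, 2 ≤ N → Λ f ≤ 2 * ((‖f‖ + 1) / N) + ∫ x, f x ∂μ := by
    intro N hN
    have hN0 : 0 < (N : ℝ) := by positivity
    set c : ℝ := (‖f‖ + 1) / N with hcdef
    have hc : 0 < c := by positivity
    have hfc : ∀ x, f x ≤ N * c := by
      intro x
      have h1 : f x ≤ ‖f‖ := le_trans (le_abs_self _) (f.norm_coe_le_norm x)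
      have h2 : (N : ℝ) * c = ‖f‖ + 1 := by rw [hcdef]; field_simp
      linarith
    -- the layer functions
    set Fi : ℕ → C(X, ℝ) := fun i =>
      ⟨fun x => min (max (f x - i * c) 0) c,
        (Continuous.max (f.continuous.sub continuous_const) continuous_const).min
          continuous_const⟩ with hFi
    have hsum0 : ∀ x, ∑ i ∈ Finset.range N, Fi i x = f x := by
      intro x
      have h := sum_min_max c hc.le (f x) (hf x) N
      rw [min_eq_left (hfc x)] at h
      exact h
    have hsum : f = ∑ i ∈ Finset.range N, Fi i := by
      ext x
      rw [ContinuousMap.coe_sum, Finset.sum_apply]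
      exact (hsum0 x).symm
    -- open and compact level sets
    set U : ℕ → Set X := fun i => {x | (i : ℝ) * c - c < f x} with hU
    have hUopen : ∀ i, IsOpen (U i) := fun i => isOpen_lt continuous_const f.continuous
    set Kc : ℕ → Set X := fun i => {x | (i : ℝ) * c ≤ f x} with hKc
    have hKclosed : ∀ i, IsClosed (Kc i) := fun i => isClosed_le continuous_const f.continuous
    have step3 : ∀ i, Λ (Fi i) ≤ c * (μ (U i)).toReal := by
      intro i
      have h1 : Λ (Fi i) ≤ c * rieszL Λ (Kc i) := by
        rw [mul_comm, ← div_le_iff₀ hc]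
        apply le_csInf (rieszA_nonempty Λ _)
        rintro _ ⟨h, hh0, hh1, rfl⟩
        rw [div_le_iff₀ hc]
        have hpt : ∀ x, Fi i x ≤ (c • h) x := by
          intro x
          simp only [ContinuousMap.smul_apply, smul_eq_mul, hFi, ContinuousMap.coe_mk]
          rcases le_or_gt ((i : ℝ) * c) (f x) with hx | hx
          · have : (1 : ℝ) ≤ h x := hh1 x hx
            calc min (max (f x - i * c) 0) c ≤ c := min_le_right _ _
              _ ≤ c * h x := by nlinarith
          · rw [max_eq_right (by linarith), min_eq_left hc.le]
            exact mul_nonneg hc.le (hh0 x)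
        calc Λ (Fi i) ≤ Λ (c • h) := lam_mono' hpos hpt
          _ = Λ h * c := by rw [ContinuousLinearMap.map_smul, smul_eq_mul, mul_comm]
      have h2 : rieszL Λ (Kc i) ≤ (μ (U i)).toReal := by
        have hsub : Kc i ⊆ U i := by
          intro x hx
          simp only [hKc, Set.mem_setOf_eq] at hx
          simp only [hU, Set.mem_setOf_eq]
          linarith
        have h3 := rieszMu_open hpos (hUopen i) ((hKclosed i).isCompact) hsub
        have h4 : (ENNReal.ofReal (rieszL Λ (Kc i))).toReal ≤ (μ (U i)).toReal :=
          ENNReal.toReal_mono (measure_ne_top μ _) h3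
        rwa [ENNReal.toReal_ofReal (rieszL_nonneg hpos _)] at h4
      calc Λ (Fi i) ≤ c * rieszL Λ (Kc i) := h1
        _ ≤ c * (μ (U i)).toReal := by nlinarith [rieszL_nonneg (Λ := Λ) hpos (Kc i)]
    have hmuone : ∀ s : Set X, (μ s).toReal ≤ 1 := by
      intro s
      have := ENNReal.toReal_mono (measure_ne_top μ Set.univ) (measure_mono (Set.subset_univ s))
      simpa [measure_univ] using this
    -- sum over the first two indices and over Ico 2 N
    have hsplit : ∑ i ∈ Finset.range N, (c * (μ (U i)).toReal)
        = (∑ i ∈ Finset.Ico 0 2, (c * (μ (U i)).toReal))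
          + ∑ i ∈ Finset.Ico 2 N, (c * (μ (U i)).toReal) := by
      rw [Finset.sum_Ico_consecutive _ (by norm_num) hN, ← Finset.range_eq_Ico]
    have hfirst : ∑ i ∈ Finset.Ico 0 2, (c * (μ (U i)).toReal) ≤ 2 * c := by
      have : Finset.Ico 0 2 = Finset.range 2 := by rw [Finset.range_eq_Ico]
      rw [this, Finset.sum_range_succ, Finset.sum_range_one]
      have := hmuone (U 0); have := hmuone (U 1)
      nlinarith [(ENNReal.toReal_nonneg : 0 ≤ (μ (U 0)).toReal),
        (ENNReal.toReal_nonneg : 0 ≤ (μ (U 1)).toReal)]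
    have hsecond : ∑ i ∈ Finset.Ico 2 N, (c * (μ (U i)).toReal) ≤ ∫ x, f x ∂μ := by
      set g : X → ℝ := fun x => ∑ i ∈ Finset.Ico 2 N, (U i).indicator (fun _ => c) x with hg
      have hgint : Integrable g μ := by
        apply integrable_finset_sum
        intro i _
        exact (integrable_const c).indicator (hUopen i).measurableSet
      have hgval : ∫ x, g x ∂μ = ∑ i ∈ Finset.Ico 2 N, (c * (μ (U i)).toReal) := by
        rw [hg, integral_finset_sum _ (fun i _ =>
          (integrable_const c).indicator (hUopen i).measurableSet)]
        congr 1
        ext i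
        rw [integral_indicator_const _ (hUopen i).measurableSet, smul_eq_mul, mul_comm, measureReal_def]
      have hgle : ∀ x, g x ≤ f x := by
        intro x
        have hgx : g x = ((Finset.Ico 2 N).filter (fun i => x ∈ U i)).card * c := by
          rw [hg]
          simp only [Set.indicator_apply]
          rw [← Finset.sum_filter, Finset.sum_const, nsmul_eq_mul]
        rw [hgx]
        set T := (Finset.Ico 2 N).filter (fun i => x ∈ U i) with hT
        rcases T.eq_empty_or_nonempty with h | h
        · rw [h]; simpa using hf x
        · set M := T.max' h with hM
          have hMT : M ∈ T := T.max'_mem h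
          have hM2 : 2 ≤ M := by
            have := Finset.mem_filter.mp hMT
            exact (Finset.mem_Ico.mp this.1).1
          have hMx : (M : ℝ) * c - c < f x := by
            have := (Finset.mem_filter.mp hMT).2
            simpa [hU] using this
          have hcard : T.card ≤ M - 1 := by
            have hsub : T ⊆ Finset.Ico 2 (M + 1) := by
              intro j hj
              have hj2 := Finset.mem_filter.mp hj
              refine Finset.mem_Ico.mpr ⟨(Finset.mem_Ico.mp hj2.1).1, ?_⟩
              exact Nat.lt_succ_of_le (T.le_max' j hj)
            calc T.card ≤ (Finset.Ico 2 (M + 1)).card := Finset.card_le_card hsub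
              _ = M + 1 - 2 := Nat.card_Ico 2 (M + 1)
              _ = M - 1 := by omega
          have hcard' : (T.card : ℝ) ≤ (M : ℝ) - 1 := by
            have : ((T.card : ℕ) : ℝ) ≤ ((M - 1 : ℕ) : ℝ) := Nat.cast_le.mpr hcard
            rwa [Nat.cast_sub (by omega), Nat.cast_one] at this
          nlinarith
      calc ∑ i ∈ Finset.Ico 2 N, (c * (μ (U i)).toReal) = ∫ x, g x ∂μ := hgval.symm
        _ ≤ ∫ x, f x ∂μ := integral_mono hgint (integrableCM μ f) hgle
    calc Λ f = ∑ i ∈ Finset.range N, Λ (Fi i) := by rw [hsum, map_sum]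
      _ ≤ ∑ i ∈ Finset.range N, (c * (μ (U i)).toReal) :=
          Finset.sum_le_sum (fun i _ => step3 i)
      _ ≤ 2 * c + ∫ x, f x ∂μ := by rw [hsplit]; linarith
  -- let N → ∞
  apply le_of_forall_pos_le_add
  intro ε hε
  obtain ⟨N, hN⟩ := exists_nat_gt (2 * (‖f‖ + 1) / ε)
  have hN2 : 2 ≤ max 2 N := le_max_left _ _
  have h := key (max 2 N) hN2
  have hNb : (2 : ℝ) * (‖f‖ + 1) / ε < max 2 N := by
    calc (2:ℝ) * (‖f‖ + 1) / ε < N := hN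
      _ ≤ max 2 N := by exact_mod_cast Nat.cast_le.mpr (le_max_right 2 N)
  have hfn : (0:ℝ) < ‖f‖ + 1 := by positivity
  have hNpos : (0:ℝ) < (max 2 N : ℕ) := by
    have : (2:ℝ) ≤ ((max 2 N : ℕ) : ℝ) := by exact_mod_cast hN2
    linarith
  have : 2 * ((‖f‖ + 1) / (max 2 N : ℕ)) ≤ ε := by
    rw [div_lt_iff₀ hε] at hNb
    rw [show (2:ℝ) * ((‖f‖ + 1) / ((max 2 N : ℕ):ℝ)) = 2 * (‖f‖ + 1) / ((max 2 N : ℕ):ℝ) by ring,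
      div_le_iff₀ hNpos]
    nlinarith
  linarith

end RMK

/-! ### The dual ball -/

instance : Nonempty (DualBall 𝕜 E) := ⟨⟨0, by simp⟩⟩

instance : CompactSpace (DualBall 𝕜 E) := by
  have h := WeakDual.isCompact_closedBall (𝕜 := 𝕜) (E := E) 0 1
  have heq : (WeakDual.toStrongDual ⁻¹' Metric.closedBall 0 1 : Set (WeakDual 𝕜 E)) =
      {φ : WeakDual 𝕜 E | ‖WeakDual.toStrongDual φ‖ ≤ 1} := by
    ext φ; simp [Metric.mem_closedBall, dist_zero_right]
  rw [heq] at h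
  exact isCompact_iff_compactSpace.mp h

lemma contEval (x : E) {p : ℝ} (hp : 0 ≤ p) :
    Continuous fun φ : DualBall 𝕜 E => ‖φ.1 x‖ ^ p :=
  (((WeakDual.eval_continuous x).comp continuous_subtype_val).norm).rpow_const fun _ => Or.inr hp

lemma eval_le_norm (x : E) (φ : DualBall 𝕜 E) : ‖φ.1 x‖ ≤ ‖x‖ := by
  have h := (WeakDual.toStrongDual φ.1).le_opNorm x
  calc ‖φ.1 x‖ ≤ ‖WeakDual.toStrongDual φ.1‖ * ‖x‖ := h
    _ ≤ 1 * ‖x‖ := by gcongr; exact φ.2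
    _ = ‖x‖ := one_mul _

/-- The function `φ ↦ ‖φ x‖ ^ p` as a continuous map on the dual ball. -/
def evalCM (x : E) {p : ℝ} (hp : 0 ≤ p) : C(DualBall 𝕜 E, ℝ) :=
  ⟨fun φ => ‖φ.1 x‖ ^ p, contEval 𝕜 x hp⟩

@[simp] lemma evalCM_apply (x : E) {p : ℝ} (hp : 0 ≤ p) (φ : DualBall 𝕜 E) :
    evalCM 𝕜 x hp φ = ‖φ.1 x‖ ^ p := rfl

lemma sumEval_bddAbove (m : ℕ) (x : Fin m → E) {p : ℝ} (hp : 0 ≤ p) :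
    BddAbove (Set.range fun φ : DualBall 𝕜 E => ∑ j, ‖φ.1 (x j)‖ ^ p) := by
  refine ⟨∑ j, ‖x j‖ ^ p, ?_⟩
  rintro _ ⟨φ, rfl⟩
  exact Finset.sum_le_sum fun j _ =>
    Real.rpow_le_rpow (norm_nonneg _) (eval_le_norm 𝕜 (x j) φ) hp

lemma sumEval_nonneg (m : ℕ) (x : Fin m → E) (p : ℝ) (φ : DualBall 𝕜 E) :
    0 ≤ ∑ j, ‖φ.1 (x j)‖ ^ p :=
  Finset.sum_le_sum (fun j _ => Real.rpow_nonneg (norm_nonneg _) p) |>.trans_eq' (by simp)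

/-- The affine function `φ ↦ ‖P x‖^{p/n} - C^{p/n}‖φ x‖^p` used in the separation argument. -/
def gD (P : E → F) (p : ℝ) (n : ℕ) (C : ℝ) (hp : 0 ≤ p) (x : E) : C(DualBall 𝕜 E, ℝ) :=
  ContinuousMap.const _ (‖P x‖ ^ (p / (n : ℝ))) - (C ^ (p / (n : ℝ))) • evalCM 𝕜 x hp

lemma gD_apply (P : E → F) (p : ℝ) (n : ℕ) (C : ℝ) (hp : 0 ≤ p) (x : E) (φ : DualBall 𝕜 E) :
    gD 𝕜 P p n C hp x φ = ‖P x‖ ^ (p / (n : ℝ)) - C ^ (p / (n : ℝ)) * ‖φ.1 x‖ ^ p := rfl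

section Separation

variable {n : ℕ} {p : ℝ} {P : E → F} {C : ℝ}

lemma homog_norm (hP : IsHomogPoly 𝕜 n P) (c : 𝕜) (x : E) :
    ‖P (c • x)‖ = ‖c‖ ^ n * ‖P x‖ := by
  obtain ⟨M, hM⟩ := hP
  have h1 : P (c • x) = M (fun _ => c • x) := hM _
  have h2 : P x = M (fun _ => x) := hM _
  have h3 : M (fun i : Fin n => c • x) = (∏ _i : Fin n, c) • M (fun _ => x) :=
    M.map_smul_univ (fun _ => c) (fun _ => x)
  rw [h1, h2, h3, Finset.prod_const, norm_smul, norm_pow]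
  simp

lemma gD_smul (hn : 0 < n) (hp : 1 ≤ p) (hP : IsHomogPoly 𝕜 n P) (hC : 0 ≤ C)
    {t : ℝ} (ht : 0 < t) (x : E) (hp0 : 0 ≤ p) :
    gD 𝕜 P p n C hp0 (((t ^ (1/p) : ℝ) : 𝕜) • x) = t • gD 𝕜 P p n C hp0 x := by
  have hppos : 0 < p := lt_of_lt_of_le one_pos hp
  set s : ℝ := t ^ (1/p) with hs
  have hs0 : 0 ≤ s := Real.rpow_nonneg ht.le _
  have hsp : s ^ p = t := by
    rw [hs, ← Real.rpow_mul ht.le, one_div_mul_cancel hppos.ne', Real.rpow_one]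
  have hcn : ‖((s : ℝ) : 𝕜)‖ = s := by
    rw [RCLike.norm_ofReal, abs_of_nonneg hs0]
  have hn0 : ((n : ℝ)) ≠ 0 := by positivity
  have hsn : (s ^ n : ℝ) ^ (p / (n : ℝ)) = t := by
    rw [← Real.rpow_natCast s n, ← Real.rpow_mul hs0]
    rw [show (n : ℝ) * (p / (n : ℝ)) = p by field_simp]
    exact hsp
  ext φ
  rw [gD_apply, ContinuousMap.smul_apply, gD_apply, smul_eq_mul]
  have h1 : ‖P ((((s : ℝ)) : 𝕜) • x)‖ ^ (p / (n : ℝ)) = t * ‖P x‖ ^ (p / (n : ℝ)) := by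
    rw [homog_norm 𝕜 hP, hcn,
      Real.mul_rpow (pow_nonneg hs0 n) (norm_nonneg _), hsn]
  have h2 : ‖φ.1 ((((s : ℝ)) : 𝕜) • x)‖ ^ p = t * ‖φ.1 x‖ ^ p := by
    have : φ.1 ((((s : ℝ)) : 𝕜) • x) = (((s : ℝ)) : 𝕜) • φ.1 x := _root_.map_smul φ.1 _ x
    rw [this, norm_smul, hcn, Real.mul_rpow hs0 (norm_nonneg _), hsp]
  rw [h1, h2]
  ring

/-- The cone used in the separation argument. -/
def coneD (P : E → F) (p : ℝ) (n : ℕ) (C : ℝ) (hp : 0 ≤ p) : Set C(DualBall 𝕜 E, ℝ) :=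
  {g | ∃ (m : ℕ) (x : Fin m → E), g = ∑ j : Fin m, gD 𝕜 P p n C hp (x j)}

lemma coneD_zero (hp0 : 0 ≤ p) : (0 : C(DualBall 𝕜 E, ℝ)) ∈ coneD 𝕜 P p n C hp0 :=
  ⟨0, Fin.elim0, by simp⟩

lemma coneD_add (hp0 : 0 ≤ p) {g₁ g₂ : C(DualBall 𝕜 E, ℝ)}
    (h₁ : g₁ ∈ coneD 𝕜 P p n C hp0) (h₂ : g₂ ∈ coneD 𝕜 P p n C hp0) :
    g₁ + g₂ ∈ coneD 𝕜 P p n C hp0 := by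
  obtain ⟨m₁, x₁, rfl⟩ := h₁
  obtain ⟨m₂, x₂, rfl⟩ := h₂
  refine ⟨m₁ + m₂, Fin.append x₁ x₂, ?_⟩
  rw [Fin.sum_univ_add]
  congr 1
  · exact Finset.sum_congr rfl fun j _ => by rw [Fin.append_left]
  · exact Finset.sum_congr rfl fun j _ => by rw [Fin.append_right]

lemma coneD_smul (hn : 0 < n) (hp : 1 ≤ p) (hP : IsHomogPoly 𝕜 n P) (hC : 0 ≤ C)
    (hp0 : 0 ≤ p) {g : C(DualBall 𝕜 E, ℝ)} {t : ℝ} (ht : 0 ≤ t)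
    (h : g ∈ coneD 𝕜 P p n C hp0) : t • g ∈ coneD 𝕜 P p n C hp0 := by
  rcases ht.eq_or_lt with rfl | ht
  · simpa using coneD_zero 𝕜 hp0
  obtain ⟨m, x, rfl⟩ := h
  refine ⟨m, fun j => ((t ^ (1/p) : ℝ) : 𝕜) • x j, ?_⟩
  rw [Finset.smul_sum]
  exact Finset.sum_congr rfl fun j _ => (gD_smul 𝕜 hn hp hP hC ht (x j) hp0).symm

lemma coneD_convex (hn : 0 < n) (hp : 1 ≤ p) (hP : IsHomogPoly 𝕜 n P) (hC : 0 ≤ C)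
    (hp0 : 0 ≤ p) : Convex ℝ (coneD 𝕜 P p n C hp0) := by
  intro g₁ h₁ g₂ h₂ a b ha hb _
  exact coneD_add 𝕜 hp0 (coneD_smul 𝕜 hn hp hP hC hp0 ha h₁)
    (coneD_smul 𝕜 hn hp hP hC hp0 hb h₂)

lemma exists_posFunctional (hn : 0 < n) (hp : 1 ≤ p) (hP : IsHomogPoly 𝕜 n P) (hC : 0 < C)
    (hdom : ∀ (m : ℕ) (x : Fin m → E),
      ∑ j, ‖P (x j)‖ ^ (p / (n : ℝ)) ≤
        C ^ (p / (n : ℝ)) * ⨆ φ : DualBall 𝕜 E, ∑ j, ‖φ.1 (x j)‖ ^ p) :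
    ∃ Λ : C(DualBall 𝕜 E, ℝ) →L[ℝ] ℝ,
      (∀ f : C(DualBall 𝕜 E, ℝ), (∀ φ, 0 ≤ f φ) → 0 ≤ Λ f) ∧ Λ 1 = 1 ∧
      ∀ x : E, ‖P x‖ ^ (p / (n : ℝ)) ≤
        C ^ (p / (n : ℝ)) * Λ (evalCM 𝕜 x (by linarith : (0:ℝ) ≤ p)) := by
  have hp0 : (0:ℝ) ≤ p := by linarith
  set O : Set C(DualBall 𝕜 E, ℝ) := {g | ∀ φ, 0 < g φ} with hO
  have hOopen : IsOpen O := by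
    rw [Metric.isOpen_iff]
    intro g hg
    obtain ⟨φ₀, -, hφ₀⟩ := isCompact_univ.exists_isMinOn (Set.univ_nonempty)
      (g.continuous.continuousOn)
    refine ⟨g φ₀, hg φ₀, ?_⟩
    intro h hdist φ
    have h1 : dist (h φ) (g φ) ≤ dist h g := ContinuousMap.dist_apply_le_dist φ
    have h2 : |h φ - g φ| < g φ₀ := lt_of_le_of_lt (by rw [← Real.dist_eq]; exact h1) hdist
    have h3 : g φ₀ ≤ g φ := hφ₀ (Set.mem_univ φ)
    have := abs_lt.mp h2
    show 0 < h φ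
    linarith
  have hOconv : Convex ℝ O := by
    intro g₁ h₁ g₂ h₂ a b ha hb hab
    intro φ
    simp only [ContinuousMap.add_apply, ContinuousMap.smul_apply, smul_eq_mul]
    rcases ha.eq_or_lt with rfl | ha'
    · rw [zero_add] at hab; subst hab; simpa using h₂ φ
    · nlinarith [h₁ φ, h₂ φ, mul_nonneg hb (h₂ φ).le]
  have hdisj : Disjoint O (coneD 𝕜 P p n C hp0) := by
    rw [Set.disjoint_left]
    rintro g hgO ⟨m, x, rfl⟩
    set g := ∑ j : Fin m, gD 𝕜 P p n C hp0 (x j) with hgdef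
    obtain ⟨φ₀, -, hφ₀⟩ := isCompact_univ.exists_isMinOn (Set.univ_nonempty)
      (g.continuous.continuousOn)
    have hε : 0 < g φ₀ := hgO φ₀
    have geval : ∀ φ : DualBall 𝕜 E, g φ =
        (∑ j, ‖P (x j)‖ ^ (p / (n : ℝ))) - C ^ (p / (n : ℝ)) * ∑ j, ‖φ.1 (x j)‖ ^ p := by
      intro φ
      rw [hgdef, ContinuousMap.coe_sum, Finset.sum_apply]
      rw [Finset.mul_sum, ← Finset.sum_sub_distrib]
      exact Finset.sum_congr rfl fun j _ => gD_apply 𝕜 P p n C hp0 (x j) φ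
    have hbdd := sumEval_bddAbove 𝕜 m x hp0
    have hkey : ∀ φ : DualBall 𝕜 E, C ^ (p / (n : ℝ)) * ∑ j, ‖φ.1 (x j)‖ ^ p ≤
        (∑ j, ‖P (x j)‖ ^ (p / (n : ℝ))) - g φ₀ := by
      intro φ
      have h1 : g φ₀ ≤ g φ := hφ₀ (Set.mem_univ φ)
      have h2 := geval φ
      linarith
    have hCp : (0:ℝ) ≤ C ^ (p / (n : ℝ)) := Real.rpow_nonneg hC.le _
    have hsup : C ^ (p / (n : ℝ)) * (⨆ φ : DualBall 𝕜 E, ∑ j, ‖φ.1 (x j)‖ ^ p) ≤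
        (∑ j, ‖P (x j)‖ ^ (p / (n : ℝ))) - g φ₀ := by
      rw [← ciSup_const_mul hbdd hCp]
      exact ciSup_le hkey
    have := hdom m x
    linarith
  obtain ⟨L, u, hLO, hLD⟩ := geometric_hahn_banach_open hOconv hOopen
    (coneD_convex 𝕜 hn hp hP hC.le hp0) hdisj
  have hu0 : u ≤ 0 := by
    have := hLD 0 (coneD_zero 𝕜 hp0)
    simpa using this
  have hD0 : ∀ g ∈ coneD 𝕜 P p n C hp0, 0 ≤ L g := by
    intro g hg
    by_contra hneg
    push_neg at hneg
    have ht : 0 < (u - 1) / L g := div_pos_of_neg_of_neg (by linarith) hneg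
    have hmem := coneD_smul 𝕜 hn hp hP hC.le hp0 ht.le hg
    have := hLD _ hmem
    rw [ContinuousLinearMap.map_smul, smul_eq_mul, div_mul_cancel₀ _ hneg.ne] at this
    linarith
  have hone : (1 : C(DualBall 𝕜 E, ℝ)) ∈ O := fun φ => by simp
  have hL1 : L 1 < 0 := lt_of_lt_of_le (hLO 1 hone) hu0
  have hLneg : ∀ h : C(DualBall 𝕜 E, ℝ), (∀ φ, 0 ≤ h φ) → L h ≤ 0 := by
    intro h hh
    have key : ∀ t : ℝ, 0 < t → L h < t * (-(L 1)) := by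
      intro t ht
      have hmem : h + t • 1 ∈ O := by
        intro φ
        simp only [hO, ContinuousMap.add_apply, ContinuousMap.smul_apply,
          ContinuousMap.one_apply, smul_eq_mul, mul_one, Set.mem_setOf_eq]
        have := hh φ
        linarith
      have := hLO _ hmem
      rw [map_add, ContinuousLinearMap.map_smul, smul_eq_mul] at this
      nlinarith
    refine le_of_forall_pos_le_add ?_
    intro ε hε
    have ht : 0 < ε / (-(L 1)) := div_pos hε (by linarith)
    have := key _ ht
    rw [div_mul_cancel₀ _ (by linarith : -(L 1) ≠ 0)] at this
    linarith
  set d : ℝ := -(L 1) with hd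
  have hdpos : 0 < d := by simp only [hd]; linarith
  refine ⟨d⁻¹ • (-L), ?_, ?_, ?_⟩
  · intro f hf
    have := hLneg f hf
    simp only [ContinuousLinearMap.smul_apply, ContinuousLinearMap.neg_apply, smul_eq_mul]
    have hdi : 0 ≤ d⁻¹ := by positivity
    nlinarith
  · simp only [ContinuousLinearMap.smul_apply, ContinuousLinearMap.neg_apply, smul_eq_mul, ← hd]
    field_simp
  · intro x
    have hmem : gD 𝕜 P p n C hp0 x ∈ coneD 𝕜 P p n C hp0 :=
      ⟨1, fun _ => x, by rw [Fin.sum_univ_one]⟩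
    have h0 := hD0 _ hmem
    have hgd : L (gD 𝕜 P p n C hp0 x) =
        ‖P x‖ ^ (p / (n : ℝ)) * L 1 - C ^ (p / (n : ℝ)) * L (evalCM 𝕜 x hp0) := by
      have hconst : ContinuousMap.const (DualBall 𝕜 E) (‖P x‖ ^ (p / (n : ℝ)))
          = (‖P x‖ ^ (p / (n : ℝ))) • (1 : C(DualBall 𝕜 E, ℝ)) := by
        ext φ; simp
      rw [gD, hconst, map_sub, ContinuousLinearMap.map_smul, ContinuousLinearMap.map_smul, smul_eq_mul, smul_eq_mul]
    simp only [ContinuousLinearMap.smul_apply, ContinuousLinearMap.neg_apply, smul_eq_mul]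
    rw [hgd] at h0
    have hL1' : L 1 = -d := by simp [hd]
    rw [hL1'] at h0
    -- h0 : 0 ≤ ‖P x‖ ^ (p/n) * (-d) - C ^ (p/n) * L (evalCM 𝕜 x hp0)
    have hdi : 0 < d⁻¹ := by positivity
    have hCp : (0:ℝ) ≤ C ^ (p / (n : ℝ)) := Real.rpow_nonneg hC.le _
    rw [show d⁻¹ * -L (evalCM 𝕜 x (by linarith : (0:ℝ) ≤ p))
      = d⁻¹ * -L (evalCM 𝕜 x hp0) from rfl]
    have h1 : ‖P x‖ ^ (p / (n : ℝ)) * d ≤ C ^ (p / (n : ℝ)) * (-(L (evalCM 𝕜 x hp0))) := by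
      nlinarith
    calc ‖P x‖ ^ (p / (n : ℝ)) = (‖P x‖ ^ (p / (n : ℝ)) * d) * d⁻¹ := by
          field_simp
      _ ≤ (C ^ (p / (n : ℝ)) * (-(L (evalCM 𝕜 x hp0)))) * d⁻¹ := by
          apply mul_le_mul_of_nonneg_right h1 hdi.le
      _ = C ^ (p / (n : ℝ)) * (d⁻¹ * -L (evalCM 𝕜 x hp0)) := by ring

end Separation

section Final

variable {n : ℕ} {p : ℝ} {P : E → F} {C : ℝ}

lemma domIneq_unrpow (hn : 0 < n) (hp : 1 ≤ p) (hC : 0 ≤ C)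
    (h : DomIneq 𝕜 p n P C) (m : ℕ) (x : Fin m → E) :
    ∑ j, ‖P (x j)‖ ^ (p / (n : ℝ)) ≤
      C ^ (p / (n : ℝ)) * ⨆ φ : DualBall 𝕜 E, ∑ j, ‖φ.1 (x j)‖ ^ p := by
  have hppos : 0 < p := lt_of_lt_of_le one_pos hp
  have hppn : 0 < p / (n:ℝ) := by positivity
  have hq : 0 < (n:ℝ) / p := by positivity
  have hp0 : (0:ℝ) ≤ p := hppos.le
  have hbdd := sumEval_bddAbove 𝕜 m x hp0
  have hS := ciSup_rpow (fun φ : DualBall 𝕜 E => sumEval_nonneg 𝕜 m x p φ) hbdd hq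
  have hA := h m x
  rw [hS] at hA
  set S := ⨆ φ : DualBall 𝕜 E, ∑ j, ‖φ.1 (x j)‖ ^ p with hSdef
  set A := ∑ j, ‖P (x j)‖ ^ (p / (n : ℝ)) with hAdef
  have hS0 : 0 ≤ S :=
    le_trans (sumEval_nonneg 𝕜 m x p (Classical.arbitrary _)) (le_ciSup hbdd _)
  have hA0 : 0 ≤ A :=
    Finset.sum_nonneg fun j _ => Real.rpow_nonneg (norm_nonneg _) _
  have hqp : ((n:ℝ)/p) * (p/(n:ℝ)) = 1 := by
    have hn0 : ((n:ℝ)) ≠ 0 := by positivity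
    field_simp
  have h2 : A ≤ (C * S ^ ((n:ℝ)/p)) ^ (p / (n:ℝ)) := by
    have h3 := Real.rpow_le_rpow (Real.rpow_nonneg hA0 _) hA hppn.le
    rwa [← Real.rpow_mul hA0, hqp, Real.rpow_one] at h3
  rwa [Real.mul_rpow hC (Real.rpow_nonneg hS0 _), ← Real.rpow_mul hS0, hqp,
    Real.rpow_one] at h2

lemma dom_to_measure (hn : 0 < n) (hp : 1 ≤ p) (hP : IsHomogPoly 𝕜 n P) (hC : 0 < C)
    (h : DomIneq 𝕜 p n P C) :
    ∃ μ : Measure (DualBall 𝕜 E), IsProbabilityMeasure μ ∧ μ.Regular ∧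
      ∀ x : E, ‖P x‖ ≤ C * (∫ φ, ‖φ.1 x‖ ^ p ∂μ) ^ ((n : ℝ) / p) := by
  have hppos : 0 < p := lt_of_lt_of_le one_pos hp
  have hp0 : (0:ℝ) ≤ p := hppos.le
  obtain ⟨Λ, hpos, hone, hkey⟩ := exists_posFunctional 𝕜 hn hp hP hC
    (domIneq_unrpow 𝕜 hn hp hC.le h)
  refine ⟨rieszMu hpos, rieszMu_isProb hpos hone, inferInstance, ?_⟩
  intro x
  set μ := rieszMu hpos with hμ
  haveI : IsProbabilityMeasure μ := rieszMu_isProb hpos hone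
  have hint : Λ (evalCM 𝕜 x hp0) ≤ ∫ φ, ‖φ.1 x‖ ^ p ∂μ := by
    have h' := le_integral_rieszMu hpos hone (evalCM 𝕜 x hp0)
      (fun φ => Real.rpow_nonneg (norm_nonneg _) _)
    exact h'
  have hI0 : 0 ≤ ∫ φ, ‖φ.1 x‖ ^ p ∂μ :=
    integral_nonneg fun φ => Real.rpow_nonneg (norm_nonneg _) _
  have h1 : ‖P x‖ ^ (p / (n:ℝ)) ≤ C ^ (p / (n:ℝ)) * ∫ φ, ‖φ.1 x‖ ^ p ∂μ := by
    refine le_trans (hkey x) ?_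
    exact mul_le_mul_of_nonneg_left hint (Real.rpow_nonneg hC.le _)
  have hq : 0 < (n:ℝ)/p := by positivity
  have hpq : (p/(n:ℝ)) * ((n:ℝ)/p) = 1 := by
    have hn0 : ((n:ℝ)) ≠ 0 := by positivity
    field_simp
  have h2 := Real.rpow_le_rpow (Real.rpow_nonneg (norm_nonneg _) _) h1 hq.le
  rwa [← Real.rpow_mul (norm_nonneg _), hpq, Real.rpow_one,
    Real.mul_rpow (Real.rpow_nonneg hC.le _) hI0, ← Real.rpow_mul hC.le, hpq,
    Real.rpow_one] at h2

lemma measure_to_dom (hn : 0 < n) (hp : 1 ≤ p) (hC : 0 < C)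
    (μ : Measure (DualBall 𝕜 E)) [IsProbabilityMeasure μ]
    (hm : ∀ x : E, ‖P x‖ ≤ C * (∫ φ, ‖φ.1 x‖ ^ p ∂μ) ^ ((n : ℝ) / p)) :
    DomIneq 𝕜 p n P C := by
  intro m x
  have hppos : 0 < p := lt_of_lt_of_le one_pos hp
  have hp0 : (0:ℝ) ≤ p := hppos.le
  have hq : 0 < (n:ℝ)/p := by positivity
  have hpn : 0 < p/(n:ℝ) := by positivity
  have hpq : (p/(n:ℝ)) * ((n:ℝ)/p) = 1 := by
    have hn0 : ((n:ℝ)) ≠ 0 := by positivity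
    field_simp
  have hbdd := sumEval_bddAbove 𝕜 m x hp0
  set S := ⨆ φ : DualBall 𝕜 E, ∑ j, ‖φ.1 (x j)‖ ^ p with hSdef
  have hS0 : 0 ≤ S :=
    le_trans (sumEval_nonneg 𝕜 m x p (Classical.arbitrary _)) (le_ciSup hbdd _)
  have hIint : ∀ j : Fin m, Integrable (fun φ : DualBall 𝕜 E => ‖φ.1 (x j)‖ ^ p) μ :=
    fun j => integrableCM μ (evalCM 𝕜 (x j) hp0)
  have haj : ∀ j : Fin m, ‖P (x j)‖ ^ (p/(n:ℝ)) ≤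
      C ^ (p/(n:ℝ)) * ∫ φ, ‖φ.1 (x j)‖ ^ p ∂μ := by
    intro j
    have hI0 : 0 ≤ ∫ φ, ‖φ.1 (x j)‖ ^ p ∂μ :=
      integral_nonneg fun φ => Real.rpow_nonneg (norm_nonneg _) _
    have h2 := Real.rpow_le_rpow (norm_nonneg _) (hm (x j)) hpn.le
    rwa [Real.mul_rpow hC.le (Real.rpow_nonneg hI0 _), ← Real.rpow_mul hI0,
      show ((n:ℝ)/p) * (p/(n:ℝ)) = 1 by
        have hn0 : ((n:ℝ)) ≠ 0 := by positivity
        field_simp,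
      Real.rpow_one] at h2
  have hsum : ∑ j, ‖P (x j)‖ ^ (p/(n:ℝ)) ≤ C ^ (p/(n:ℝ)) * S := by
    calc ∑ j, ‖P (x j)‖ ^ (p/(n:ℝ))
        ≤ ∑ j, C ^ (p/(n:ℝ)) * ∫ φ, ‖φ.1 (x j)‖ ^ p ∂μ :=
          Finset.sum_le_sum fun j _ => haj j
      _ = C ^ (p/(n:ℝ)) * ∫ φ, ∑ j, ‖φ.1 (x j)‖ ^ p ∂μ := by
          rw [← Finset.mul_sum, integral_finset_sum _ (fun j _ => hIint j)]
      _ ≤ C ^ (p/(n:ℝ)) * S := by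
          refine mul_le_mul_of_nonneg_left ?_ (Real.rpow_nonneg hC.le _)
          have hle : ∀ φ : DualBall 𝕜 E, ∑ j, ‖φ.1 (x j)‖ ^ p ≤ S :=
            fun φ => le_ciSup hbdd φ
          calc ∫ φ, ∑ j, ‖φ.1 (x j)‖ ^ p ∂μ
              ≤ ∫ _φ, S ∂μ := integral_mono
                (integrable_finset_sum _ fun j _ => hIint j) (integrable_const S) hle
            _ = S := by simp
  have hA0 : 0 ≤ ∑ j, ‖P (x j)‖ ^ (p/(n:ℝ)) :=
    Finset.sum_nonneg fun j _ => Real.rpow_nonneg (norm_nonneg _) _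
  have hfinal := Real.rpow_le_rpow hA0 hsum hq.le
  rw [Real.mul_rpow (Real.rpow_nonneg hC.le _) hS0, ← Real.rpow_mul hC.le, hpq,
    Real.rpow_one] at hfinal
  rw [ciSup_rpow (fun φ => sumEval_nonneg 𝕜 m x p φ) hbdd hq]
  exact hfinal

end Final

/-- Pietsch-type domination theorem for `p`-dominated `n`-homogeneous polynomials, together
with the formula for the `p`-dominated norm. -/
theorem statement0 [CompleteSpace E] [CompleteSpace F]
    (n : ℕ) (hn : 0 < n) (p : ℝ) (hp : 1 ≤ p) (P : E → F) (hP : IsHomogPoly 𝕜 n P) :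
    ((∃ C > 0, DomIneq 𝕜 p n P C) ↔
      (∃ C > 0, ∃ μ : Measure (DualBall 𝕜 E), IsProbabilityMeasure μ ∧ μ.Regular ∧
        ∀ x : E, ‖P x‖ ≤ C * (∫ φ, ‖φ.1 x‖ ^ p ∂μ) ^ ((n : ℝ) / p))) ∧
    domNorm 𝕜 p n P =
      sInf {C : ℝ | 0 < C ∧ ∃ μ : Measure (DualBall 𝕜 E), IsProbabilityMeasure μ ∧ μ.Regular ∧
        ∀ x : E, ‖P x‖ ≤ C * (∫ φ, ‖φ.1 x‖ ^ p ∂μ) ^ ((n : ℝ) / p)} := by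
  have hset : {C : ℝ | 0 < C ∧ DomIneq 𝕜 p n P C} =
      {C : ℝ | 0 < C ∧ ∃ μ : Measure (DualBall 𝕜 E), IsProbabilityMeasure μ ∧ μ.Regular ∧
        ∀ x : E, ‖P x‖ ≤ C * (∫ φ, ‖φ.1 x‖ ^ p ∂μ) ^ ((n : ℝ) / p)} := by
    ext C
    simp only [Set.mem_setOf_eq]
    constructor
    · rintro ⟨hC, hdom⟩
      exact ⟨hC, dom_to_measure 𝕜 hn hp hP hC hdom⟩
    · rintro ⟨hC, μ, hprob, hreg, hm⟩
      exact ⟨hC, haveI := hprob; measure_to_dom 𝕜 hn hp hC μ hm⟩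
  constructor
  · constructor
    · rintro ⟨C, hC, hdom⟩
      exact ⟨C, hC, dom_to_measure 𝕜 hn hp hP hC hdom⟩
    · rintro ⟨C, hC, μ, hprob, hreg, hm⟩
      exact ⟨C, hC, haveI := hprob; measure_to_dom 𝕜 hn hp hC μ hm⟩
  · rw [domNorm, hset]
end
end

section
/- Let E be a Banach space, n a positive integer, 1 ≤ p < ∞, and let μ be a regular Borel probability measure on B_{E*} with the weak* topology. Then for every m and all x_1, …, x_m ∈ E, (Σ_{i=1}^m π_{p/n}((e_{x_i})^n)^{p/n})^{n/p} ≤ sup_{x* ∈ B_{E*}} (Σ_{i=1}^m |⟨x*, x_i⟩|^p)^{n/p}; that is, the n-homogeneous polynomial x ↦ (e_x)^n from E into (E^{p/n}, π_{p/n}) is p-dominated with ‖·‖_{d,p}-norm at most 1. -/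
open MeasureTheory Finset
open scoped Classical

noncomputable section

variable (𝕜 : Type) [RCLike 𝕜] {E F G : Type} [NormedAddCommGroup E] [NormedSpace 𝕜 E]
  [NormedAddCommGroup F] [NormedSpace 𝕜 F] [NormedAddCommGroup G] [NormedSpace 𝕜 G]

/-- The canonical polynomial `x ↦ (e_x)^n` from `E` into `(E^{p/n}, π_{p/n})` satisfies the
`p`-domination inequality with constant `1`. -/
theorem statement3 [CompleteSpace E]
    (n : ℕ) (hn : 0 < n) (p : ℝ) (hp : 1 ≤ p)
    (μ : Measure (DualBall 𝕜 E)) (hμ : IsProbabilityMeasure μ) (hreg : μ.Regular)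
    (m : ℕ) (x : Fin m → E) :
    (∑ i, piNorm 𝕜 p n μ (evalPowLp 𝕜 p n μ (x i)) ^ (p / (n : ℝ))) ^ ((n : ℝ) / p) ≤
      ⨆ φ : DualBall 𝕜 E, (∑ i, ‖φ.1 (x i)‖ ^ p) ^ ((n : ℝ) / p) := by
  have hn' : (0 : ℝ) < (n : ℝ) := Nat.cast_pos.mpr hn
  have hp0 : (0 : ℝ) < p := lt_of_lt_of_le one_pos hp
  have hq : (0 : ℝ) < p / (n : ℝ) := div_pos hp0 hn'
  set q : ENNReal := ENNReal.ofReal (p / (n : ℝ)) with hqdef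
  have hq0 : q ≠ 0 := by simp [hqdef, ENNReal.ofReal_eq_zero, not_le, hq]
  have hqt : q ≠ ⊤ := ENNReal.ofReal_ne_top
  have hqr : q.toReal = p / (n : ℝ) := ENNReal.toReal_ofReal hq.le
  -- pointwise bound on evaluations
  have hb : ∀ (φ : DualBall 𝕜 E) (y : E), ‖φ.1 y‖ ≤ ‖y‖ := by
    intro φ y
    calc ‖φ.1 y‖ = ‖(WeakDual.toStrongDual φ.1) y‖ := rfl
      _ ≤ ‖WeakDual.toStrongDual φ.1‖ * ‖y‖ := (WeakDual.toStrongDual φ.1).le_opNorm y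
      _ ≤ 1 * ‖y‖ := mul_le_mul_of_nonneg_right φ.2 (norm_nonneg y)
      _ = ‖y‖ := one_mul _
  have hcont : ∀ y : E, Continuous fun φ : DualBall 𝕜 E => φ.1 y := fun y =>
    (WeakDual.eval_continuous y).comp continuous_subtype_val
  -- membership in L_{p/n}
  have hmem : ∀ y : E, MemLp (fun φ : DualBall 𝕜 E => (φ.1 y) ^ n) q μ := by
    intro y
    refine MemLp.of_bound ((hcont y).pow n).aestronglyMeasurable (‖y‖ ^ n)
      (ae_of_all _ fun φ => ?_)
    rw [norm_pow]
    exact pow_le_pow_left₀ (norm_nonneg _) (hb φ y) n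
  -- pointwise : ‖(φ y)^n‖ ^ (p/n) = ‖φ y‖ ^ p
  have hptw : ∀ (y : E) (φ : DualBall 𝕜 E),
      ‖(φ.1 y) ^ n‖ ^ (p / (n : ℝ)) = ‖φ.1 y‖ ^ p := by
    intro y φ
    rw [norm_pow, ← Real.rpow_natCast ‖φ.1 y‖ n, ← Real.rpow_mul (norm_nonneg _)]
    congr 1
    field_simp
  -- the norm of evalPowLp
  have hnorm : ∀ y : E,
      ‖evalPowLp 𝕜 p n μ y‖ ^ (p / (n : ℝ)) = ∫ φ, ‖φ.1 (y)‖ ^ p ∂μ := by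
    intro y
    rw [evalPowLp, dif_pos (hmem y), Lp.norm_toLp,
      (hmem y).eLpNorm_eq_integral_rpow_norm hq0 hqt,
      ENNReal.toReal_ofReal (by positivity), hqr,
      Real.rpow_inv_rpow (integral_nonneg fun φ => by positivity) hq.ne']
    exact integral_congr_ae (ae_of_all _ fun φ => hptw y φ)
  have hpinn : ∀ y : E, 0 ≤ piNorm 𝕜 p n μ (evalPowLp 𝕜 p n μ y) := by
    intro y
    apply Real.sInf_nonneg
    rintro t ⟨m', c, z, -, rfl⟩
    exact Finset.sum_nonneg fun i _ => mul_nonneg (norm_nonneg _)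
      (by rw [Lp.norm_def]; exact ENNReal.toReal_nonneg)
  have hpile : ∀ y : E,
      piNorm 𝕜 p n μ (evalPowLp 𝕜 p n μ y) ≤ ‖evalPowLp 𝕜 p n μ y‖ := by
    intro y
    apply csInf_le
    · refine ⟨0, ?_⟩
      rintro t ⟨m', c, z, -, rfl⟩
      exact Finset.sum_nonneg fun i _ => mul_nonneg (norm_nonneg _)
        (by rw [Lp.norm_def]; exact ENNReal.toReal_nonneg)
    · refine ⟨1, fun _ => (1:𝕜), fun _ => y, by simp, by simp⟩
  -- the supremum S
  set S : ℝ := ⨆ φ : DualBall 𝕜 E, (∑ i, ‖φ.1 (x i)‖ ^ p) ^ ((n : ℝ) / p) with hSdef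
  haveI : Nonempty (DualBall 𝕜 E) := ⟨⟨0, by simp⟩⟩
  have hbdd : BddAbove (Set.range fun φ : DualBall 𝕜 E =>
      (∑ i, ‖φ.1 (x i)‖ ^ p) ^ ((n : ℝ) / p)) := by
    refine ⟨(∑ i, ‖x i‖ ^ p) ^ ((n : ℝ) / p), ?_⟩
    rintro t ⟨φ, rfl⟩
    refine Real.rpow_le_rpow (by positivity) ?_ (by positivity)
    exact Finset.sum_le_sum fun i _ =>
      Real.rpow_le_rpow (norm_nonneg _) (hb φ (x i)) hp0.le
  have hS0 : 0 ≤ S := Real.iSup_nonneg fun φ => by positivity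
  -- pointwise bound for the integrand
  have hsum_le : ∀ φ : DualBall 𝕜 E, (∑ i, ‖φ.1 (x i)‖ ^ p) ≤ S ^ (p / (n : ℝ)) := by
    intro φ
    have h1 : (∑ i, ‖φ.1 (x i)‖ ^ p) ^ ((n : ℝ) / p) ≤ S := le_ciSup hbdd φ
    have h2 : ((∑ i, ‖φ.1 (x i)‖ ^ p) ^ ((n : ℝ) / p)) ^ (p / (n : ℝ)) ≤
        S ^ (p / (n : ℝ)) := Real.rpow_le_rpow (by positivity) h1 hq.le
    rwa [← Real.rpow_mul (by positivity),
      show ((n : ℝ) / p) * (p / (n : ℝ)) = 1 by field_simp, Real.rpow_one] at h2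
  -- integrability
  have hint : ∀ i : Fin m, Integrable (fun φ : DualBall 𝕜 E => ‖φ.1 (x i)‖ ^ p) μ := by
    intro i
    refine memLp_one_iff_integrable.mp ?_
    refine MemLp.of_bound ?_ (‖x i‖ ^ p) (ae_of_all _ fun φ => ?_)
    · exact (((hcont (x i)).norm).rpow_const fun φ => Or.inr hp0.le).aestronglyMeasurable
    · rw [Real.norm_eq_abs, abs_of_nonneg (by positivity)]
      exact Real.rpow_le_rpow (norm_nonneg _) (hb φ (x i)) hp0.le
  -- main chain
  have key : ∑ i, piNorm 𝕜 p n μ (evalPowLp 𝕜 p n μ (x i)) ^ (p / (n : ℝ)) ≤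
      S ^ (p / (n : ℝ)) := by
    calc ∑ i, piNorm 𝕜 p n μ (evalPowLp 𝕜 p n μ (x i)) ^ (p / (n : ℝ))
        ≤ ∑ i, ‖evalPowLp 𝕜 p n μ (x i)‖ ^ (p / (n : ℝ)) :=
          Finset.sum_le_sum fun i _ =>
            Real.rpow_le_rpow (hpinn (x i)) (hpile (x i)) hq.le
      _ = ∑ i, ∫ φ, ‖φ.1 (x i)‖ ^ p ∂μ := by
          exact Finset.sum_congr rfl fun i _ => hnorm (x i)
      _ = ∫ φ, ∑ i, ‖φ.1 (x i)‖ ^ p ∂μ := (integral_finset_sum _ fun i _ => hint i).symm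
      _ ≤ ∫ _, S ^ (p / (n : ℝ)) ∂μ := by
          refine integral_mono (integrable_finset_sum _ fun i _ => hint i)
            (integrable_const _) hsum_le
      _ = S ^ (p / (n : ℝ)) := by simp [measure_univ]
  calc (∑ i, piNorm 𝕜 p n μ (evalPowLp 𝕜 p n μ (x i)) ^ (p / (n : ℝ))) ^ ((n : ℝ) / p)
      ≤ (S ^ (p / (n : ℝ))) ^ ((n : ℝ) / p) := by
        refine Real.rpow_le_rpow ?_ key (by positivity)
        exact Finset.sum_nonneg fun i _ => Real.rpow_nonneg (hpinn (x i)) _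
    _ = S := by
        rw [← Real.rpow_mul hS0,
          show (p / (n : ℝ)) * ((n : ℝ) / p) = 1 by field_simp, Real.rpow_one]
end
end
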